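/- For a prime power q = pʳ with p ∉ {2,3,5}, the number of F_q-points of the affine Consani–Scholten quintic X = {P(x₁,x₂) = P(x₄,x₅)} ⊂ 𝔸⁴ satisfies #X(F_q) ≡ #C(F_q) (mod 4), where C ⊂ 𝔸² is the curve {P(y,y) = P(z,z)}; consequently #X(F_q) ≡ q (mod 4). -/

import Mathlib

/-- The Chebyshev-type polynomial
`P(y,z) = (y⁵+z⁵) − 5yz(y²+z²) + 5yz(y+z) + 5(y²+z²) − 5(y+z)`. -/
def chebP {K : Type*} [CommRing K] (y z : K) : K :=
  (y ^ 5 + z ^ 5) - 5 * y * z * (y ^ 2 + z ^ 2) + 5 * y * z * (y + z)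
    + 5 * (y ^ 2 + z ^ 2) - 5 * (y + z)


open Finset in
lemma aux_even_card {α : Type*} [DecidableEq α] (S : Finset α) (σ : α → α)
    (hinv : ∀ a, σ (σ a) = a) (hmem : ∀ a ∈ S, σ a ∈ S) (hne : ∀ a ∈ S, σ a ≠ a) :
    S.card % 2 = 0 := by
  have key := Finset.card_eq_sum_card_image (fun a => ({a, σ a} : Finset α)) S
  have hfib : ∀ b ∈ S.image (fun a => ({a, σ a} : Finset α)),
      (S.filter fun x => ({x, σ x} : Finset α) = b).card = 2 := by
    intro b hb
    obtain ⟨a, ha, rfl⟩ := Finset.mem_image.mp hb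
    have hset : (S.filter fun x => ({x, σ x} : Finset α) = {a, σ a}) = {a, σ a} := by
      ext x
      simp only [Finset.mem_filter, Finset.mem_insert, Finset.mem_singleton]
      constructor
      · rintro ⟨hxS, hx⟩
        have hx' : x ∈ ({x, σ x} : Finset α) := by simp
        rw [hx] at hx'
        simpa using hx'
      · rintro (rfl | rfl)
        · exact ⟨ha, rfl⟩
        · exact ⟨hmem a ha, by rw [hinv a]; exact Finset.pair_comm _ _⟩
    rw [hset]
    exact Finset.card_pair (Ne.symm (hne a ha))
  rw [key, Finset.sum_congr rfl hfib, Finset.sum_const, smul_eq_mul]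
  omega

open Finset in
lemma aux_card_mod_four {α : Type*} [DecidableEq α] (S : Finset α) (σ ν : α → α)
    (hσ : ∀ a, σ (σ a) = a) (hν : ∀ a, ν (ν a) = a) (hc : ∀ a, σ (ν a) = ν (σ a))
    (hmσ : ∀ a ∈ S, σ a ∈ S) (hmν : ∀ a ∈ S, ν a ∈ S)
    (h1 : ∀ a ∈ S, σ a ≠ a) (h2 : ∀ a ∈ S, ν a ≠ a) (h3 : ∀ a ∈ S, σ (ν a) ≠ a) :
    S.card % 4 = 0 := by
  set o : α → Finset α := fun a => {a, σ a, ν a, σ (ν a)} with ho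
  have key := Finset.card_eq_sum_card_image o S
  have horbit : ∀ x a, x ∈ o a → o x = o a := by
    intro x a hx
    simp only [ho, Finset.mem_insert, Finset.mem_singleton] at hx
    rcases hx with rfl | rfl | rfl | rfl
    · rfl
    · ext y
      simp only [ho, Finset.mem_insert, Finset.mem_singleton, hσ, hν, ← hc]
      tauto
    · ext y
      simp only [ho, Finset.mem_insert, Finset.mem_singleton, hσ, hν, ← hc]
      tauto
    · ext y
      simp only [ho, Finset.mem_insert, Finset.mem_singleton, hσ, hν, ← hc]
      tauto
  have hfib : ∀ b ∈ S.image o, (S.filter fun x => o x = b).card = 4 := by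
    intro b hb
    obtain ⟨a, ha, rfl⟩ := Finset.mem_image.mp hb
    have hself : ∀ x, x ∈ o x := by intro x; simp [ho]
    have hset : S.filter (fun x => o x = o a) = o a := by
      ext x
      constructor
      · intro hx
        obtain ⟨hxS, hxo⟩ := Finset.mem_filter.mp hx
        rw [← hxo]; exact hself x
      · intro hx
        refine Finset.mem_filter.mpr ⟨?_, horbit x a hx⟩
        have hx' := hx
        simp only [ho, Finset.mem_insert, Finset.mem_singleton] at hx'
        rcases hx' with rfl | rfl | rfl | rfl
        · exact ha
        · exact hmσ a ha
        · exact hmν a ha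
        · exact hmσ _ (hmν a ha)
    rw [hset]
    have d1 : σ a ≠ a := h1 a ha
    have d2 : ν a ≠ a := h2 a ha
    have d3 : σ (ν a) ≠ a := h3 a ha
    have d4 : σ a ≠ ν a := by
      intro h; exact d3 (by rw [← h, hσ])
    have d5 : σ a ≠ σ (ν a) := by
      intro h
      have := congrArg σ h
      rw [hσ, hσ] at this
      exact d2 this.symm
    have d6 : ν a ≠ σ (ν a) := by
      intro h
      have := congrArg ν h
      rw [hν, ← hc, hν] at this
      exact d1 this.symm
    show ({a, σ a, ν a, σ (ν a)} : Finset α).card = 4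
    rw [Finset.card_insert_of_notMem (by
        simp only [Finset.mem_insert, Finset.mem_singleton]
        push_neg
        exact ⟨Ne.symm d1, Ne.symm d2, Ne.symm d3⟩),
      Finset.card_insert_of_notMem (by
        simp only [Finset.mem_insert, Finset.mem_singleton]
        push_neg
        exact ⟨d4, d5⟩),
      Finset.card_insert_of_notMem (by simpa using d6),
      Finset.card_singleton]
  rw [key, Finset.sum_congr rfl hfib, Finset.sum_const, smul_eq_mul]
  omega

lemma aux_card_pairs {A K : Type*} [Fintype A] [Fintype K] [DecidableEq K] [DecidableEq A]
    (F : A → K) :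
    (Finset.univ.filter fun p : A × A => F p.1 = F p.2).card
      = ∑ c : K, ((Finset.univ.filter fun a : A => F a = c).card) ^ 2 := by
  classical
  rw [Finset.card_eq_sum_card_fiberwise (f := fun p : A × A => F p.1) (t := Finset.univ)
      (fun x _ => Finset.mem_univ _)]
  refine Finset.sum_congr rfl fun c _ => ?_
  have hset : ((Finset.univ.filter fun p : A × A => F p.1 = F p.2).filter
        fun p => F p.1 = c)
      = (Finset.univ.filter fun a : A => F a = c) ×ˢ
        (Finset.univ.filter fun a : A => F a = c) := by
    ext ⟨a, b⟩
    simp only [Finset.mem_filter, Finset.mem_product, Finset.mem_univ, true_and]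
    constructor
    · rintro ⟨h1, h2⟩
      exact ⟨h2, by rw [← h1]; exact h2⟩
    · rintro ⟨h1, h2⟩
      exact ⟨h1.trans h2.symm, h1⟩
  rw [hset, Finset.card_product, sq]

/-- For `q = pʳ` with `p ∉ {2,3,5}` prime, the affine Consani–Scholten quintic
`X = {P(x₁,x₂) = P(x₄,x₅)} ⊂ 𝔸⁴` satisfies `#X(F_q) ≡ #C(F_q) (mod 4)` where
`C = {P(y,y) = P(z,z)} ⊂ 𝔸²`, and consequently `#X(F_q) ≡ q (mod 4)`. -/
theorem affine_quintic_points_mod_four (p r q : ℕ) (hp : p.Prime) (hp2 : p ≠ 2)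
    (hp3 : p ≠ 3) (hp5 : p ≠ 5) (hr : 0 < r) (hq : q = p ^ r)
    (K : Type*) [Field K] [Fintype K] (hK : Fintype.card K = q) :
    Nat.card {x : Fin 4 → K // chebP (x 0) (x 1) = chebP (x 2) (x 3)} % 4 =
      Nat.card {yz : K × K // chebP yz.1 yz.1 = chebP yz.2 yz.2} % 4 ∧
    Nat.card {x : Fin 4 → K // chebP (x 0) (x 1) = chebP (x 2) (x 3)} % 4 = q % 4 := by
  classical
  -- characteristic facts
  have hq0 : ((q : ℕ) : K) = 0 := by rw [← hK]; exact FiniteField.cast_card_eq_zero K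
  have hpK : (p : K) = 0 := by
    have hpow : ((p : K)) ^ r = 0 := by
      rw [← Nat.cast_pow, ← hq]; exact hq0
    exact pow_eq_zero_iff hr.ne' |>.mp hpow
  have hchar : ringChar K = p := by
    have h1 : ringChar K ∣ p := (CharP.cast_eq_zero_iff K (ringChar K) p).mp hpK
    have h2 : (ringChar K).Prime := CharP.char_is_prime K (ringChar K)
    exact (Nat.prime_dvd_prime_iff_eq h2 hp).mp h1
  have hcast_ne : ∀ n : ℕ, n.Prime → p ≠ n → ((n : ℕ) : K) ≠ 0 := by
    intro n hn hpn h0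
    have hd : ringChar K ∣ n := (CharP.cast_eq_zero_iff K (ringChar K) n).mp h0
    rw [hchar] at hd
    exact hpn ((Nat.prime_dvd_prime_iff_eq hp hn).mp hd)
  have h2K : (2 : K) ≠ 0 := by
    have := hcast_ne 2 Nat.prime_two hp2
    simpa using this
  have h5K : (5 : K) ≠ 0 := by
    have := hcast_ne 5 (by norm_num) hp5
    simpa using this
  set g : K → K := fun y => chebP y y with hgdef
  set F : K × K → K := fun a => chebP a.1 a.2 with hFdef
  obtain ⟨n, hndef⟩ : ∃ n : K → ℕ,
      n = fun c => ((Finset.univ.filter fun a : K × K => F a = c).card) := ⟨_, rfl⟩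
  obtain ⟨m, hmdef⟩ : ∃ m : K → ℕ,
      m = fun c => ((Finset.univ.filter fun a : K => g a = c).card) := ⟨_, rfl⟩
  have sumX : (Finset.univ.filter fun pr : (K × K) × (K × K) => F pr.1 = F pr.2).card
      = ∑ c : K, (n c) ^ 2 := by rw [hndef]; exact aux_card_pairs F
  have sumC : (Finset.univ.filter fun pr : K × K => g pr.1 = g pr.2).card
      = ∑ c : K, (m c) ^ 2 := by rw [hmdef]; exact aux_card_pairs g
  have hsymm : ∀ y z : K, chebP y z = chebP z y := by
    intro y z; simp only [chebP]; ring
  -- parity of fibers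
  have parity : ∀ c : K, n c % 2 = m c % 2 := by
    intro c
    have hsplit := Finset.card_filter_add_card_filter_not
      (s := Finset.univ.filter fun a : K × K => F a = c) (p := fun a : K × K => a.1 = a.2)
    rw [Finset.filter_filter, Finset.filter_filter] at hsplit
    have hdiag : (Finset.univ.filter fun a : K × K => F a = c ∧ a.1 = a.2).card
        = (Finset.univ.filter fun a : K => g a = c).card := by
      refine (Finset.card_nbij (i := fun y : K => ((y, y) : K × K)) ?_ ?_ ?_).symm
      · intro y hy
        simp only [Finset.mem_coe, Finset.mem_filter, Finset.mem_univ, true_and] at hy ⊢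
        exact ⟨hy, trivial⟩
      · intro a _ b _ hab
        exact congrArg Prod.fst hab
      · intro b hb
        simp only [Finset.mem_coe, Finset.mem_filter, Finset.mem_univ, true_and] at hb
        refine ⟨b.1, ?_, ?_⟩
        · simp only [Finset.mem_coe, Finset.mem_filter, Finset.mem_univ, true_and]
          have : F b = g b.1 := by
            simp only [hFdef, hgdef]
            rw [← hb.2]
          rw [← this]; exact hb.1
        · exact Prod.ext rfl hb.2
    have hoff : (Finset.univ.filter fun a : K × K => F a = c ∧ ¬ a.1 = a.2).card % 2 = 0 := by
      apply aux_even_card _ (fun a : K × K => ((a.2, a.1) : K × K))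
      · intro a; rfl
      · intro a ha
        simp only [Finset.mem_filter, Finset.mem_univ, true_and] at ha ⊢
        refine ⟨?_, fun h => ha.2 h.symm⟩
        have : F (a.2, a.1) = F a := by
          simp only [hFdef]; exact hsymm a.2 a.1
        rw [this]; exact ha.1
      · intro a ha h
        simp only [Finset.mem_filter, Finset.mem_univ, true_and] at ha
        exact ha.2 (congrArg Prod.fst h).symm
    simp only [hndef, hmdef]
    omega
  -- sums mod 4
  have sums_mod : (∑ c : K, (n c) ^ 2) % 4 = (∑ c : K, (m c) ^ 2) % 4 := by
    have hdvd : (4 : ℤ) ∣ (∑ c : K, ((n c : ℤ)) ^ 2) - ∑ c : K, ((m c : ℤ)) ^ 2 := by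
      rw [← Finset.sum_sub_distrib]
      refine Finset.dvd_sum fun c _ => ?_
      have hpar := parity c
      have e1 : (2 : ℤ) ∣ (n c : ℤ) - (m c : ℤ) := by omega
      have e2 : (2 : ℤ) ∣ (n c : ℤ) + (m c : ℤ) := by omega
      obtain ⟨a, ha⟩ := e1
      obtain ⟨b, hb⟩ := e2
      refine ⟨a * b, ?_⟩
      have hfac : (n c : ℤ) ^ 2 - (m c : ℤ) ^ 2
          = ((n c : ℤ) - (m c : ℤ)) * ((n c : ℤ) + (m c : ℤ)) := by ring
      rw [hfac, ha, hb]; ring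
    have hcast : ((∑ c : K, (n c) ^ 2 : ℕ) : ℤ) - ((∑ c : K, (m c) ^ 2 : ℕ) : ℤ)
        = (∑ c : K, ((n c : ℤ)) ^ 2) - ∑ c : K, ((m c : ℤ)) ^ 2 := by
      push_cast; ring
    rw [← hcast] at hdvd
    omega
  
  -- Part 2: #C mod 4 = q mod 4
  obtain ⟨h, hhdef⟩ : ∃ h : K → K, h = fun u => u ^ 5 - 5 * u ^ 3 + 5 * u := ⟨_, rfl⟩
  have hgh : ∀ y : K, g y = 2 * h (y - 1) + 2 := by
    intro y; simp only [hgdef, hhdef, chebP]; ring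
  have hodd : ∀ u : K, h (-u) = - h u := by intro u; simp only [hhdef]; ring
  have hcancel : ∀ y z : K, g y = g z ↔ h (y - 1) = h (z - 1) := by
    intro y z
    rw [hgh, hgh]
    constructor
    · intro hyz
      exact mul_left_cancel₀ h2K (add_right_cancel hyz)
    · intro hyz; rw [hyz]
  have cardShift : (Finset.univ.filter fun pr : K × K => g pr.1 = g pr.2).card
      = (Finset.univ.filter fun pr : K × K => h pr.1 = h pr.2).card := by
    apply Finset.card_nbij (i := fun pr : K × K => ((pr.1 - 1, pr.2 - 1) : K × K))
    · intro a ha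
      simp only [Finset.mem_coe, Finset.mem_filter, Finset.mem_univ, true_and] at ha ⊢
      exact (hcancel a.1 a.2).mp ha
    · intro a _ b _ hab
      have h1 := congrArg Prod.fst hab
      have h2 := congrArg Prod.snd hab
      simp only at h1 h2
      exact Prod.ext (by linear_combination h1) (by linear_combination h2)
    · intro b hb
      simp only [Finset.mem_coe, Finset.mem_filter, Finset.mem_univ, true_and] at hb
      refine ⟨(b.1 + 1, b.2 + 1), ?_, ?_⟩
      · simp only [Finset.mem_coe, Finset.mem_filter, Finset.mem_univ, true_and]
        refine (hcancel (b.1 + 1) (b.2 + 1)).mpr ?_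
        simpa using hb
      · exact Prod.ext (by ring) (by ring)
  -- split off the diagonal
  have hsplit2 := Finset.card_filter_add_card_filter_not
    (s := Finset.univ.filter fun pr : K × K => h pr.1 = h pr.2)
    (p := fun pr : K × K => pr.1 = pr.2)
  rw [Finset.filter_filter, Finset.filter_filter] at hsplit2
  have hdiag2 : (Finset.univ.filter fun pr : K × K => h pr.1 = h pr.2 ∧ pr.1 = pr.2).card
      = q := by
    have hb := Finset.card_nbij (s := (Finset.univ : Finset K))
      (t := Finset.univ.filter fun pr : K × K => h pr.1 = h pr.2 ∧ pr.1 = pr.2)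
      (i := fun y : K => ((y, y) : K × K))
      (by intro y _; simp)
      (by intro a _ b _ hab; exact congrArg Prod.fst hab)
      (by intro b hb
          simp only [Finset.mem_coe, Finset.mem_filter, Finset.mem_univ, true_and] at hb
          exact ⟨b.1, Finset.mem_coe.mpr (Finset.mem_univ _), Prod.ext rfl hb.2⟩)
    rw [← hb, Finset.card_univ, hK]
  -- split the off-diagonal part by u + v = 0 or not
  have hsplit3 := Finset.card_filter_add_card_filter_not
    (s := Finset.univ.filter fun pr : K × K => h pr.1 = h pr.2 ∧ ¬ pr.1 = pr.2)
    (p := fun pr : K × K => pr.1 + pr.2 = 0)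
  rw [Finset.filter_filter, Finset.filter_filter] at hsplit3
  -- the part with u + v ≠ 0 : free Klein four group action
  have hTA : (Finset.univ.filter fun pr : K × K =>
      (h pr.1 = h pr.2 ∧ ¬ pr.1 = pr.2) ∧ ¬ pr.1 + pr.2 = 0).card % 4 = 0 := by
    apply aux_card_mod_four _ (fun pr : K × K => ((pr.2, pr.1) : K × K))
      (fun pr : K × K => ((-pr.1, -pr.2) : K × K))
    · intro a; rfl
    · intro a; simp
    · intro a; rfl
    · intro a ha
      simp only [Finset.mem_filter, Finset.mem_univ, true_and] at ha ⊢
      refine ⟨⟨ha.1.1.symm, fun e => ha.1.2 e.symm⟩, fun e => ha.2 ?_⟩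
      rwa [add_comm] at e
    · intro a ha
      simp only [Finset.mem_filter, Finset.mem_univ, true_and] at ha ⊢
      refine ⟨⟨?_, fun e => ha.1.2 (neg_inj.mp e)⟩, fun e => ha.2 ?_⟩
      · rw [hodd, hodd, ha.1.1]
      · rwa [← neg_add, neg_eq_zero] at e
    · intro a ha hfix
      simp only [Finset.mem_filter, Finset.mem_univ, true_and] at ha
      exact ha.1.2 (congrArg Prod.fst hfix).symm
    · intro a ha hfix
      simp only [Finset.mem_filter, Finset.mem_univ, true_and] at ha
      have e1 : -a.1 = a.1 := congrArg Prod.fst hfix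
      have e2 : -a.2 = a.2 := congrArg Prod.snd hfix
      have ha1 : a.1 = 0 := by
        rcases mul_eq_zero.mp (show (2 : K) * a.1 = 0 by linear_combination - e1) with hc | hc
        · exact absurd hc h2K
        · exact hc
      have ha2 : a.2 = 0 := by
        rcases mul_eq_zero.mp (show (2 : K) * a.2 = 0 by linear_combination - e2) with hc | hc
        · exact absurd hc h2K
        · exact hc
      exact ha.1.2 (ha1.trans ha2.symm)
    · intro a ha hfix
      simp only [Finset.mem_filter, Finset.mem_univ, true_and] at ha
      have e1 : -a.2 = a.1 := congrArg Prod.fst hfix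
      exact ha.2 (by linear_combination - e1)
  -- the part with u + v = 0 : in bijection with the roots of u^4 - 5u^2 + 5
  obtain ⟨Rf, hRfdef⟩ : ∃ Rf : Finset K,
      Rf = Finset.univ.filter fun u : K => u ^ 4 - 5 * u ^ 2 + 5 = 0 := ⟨_, rfl⟩
  have hTB : (Finset.univ.filter fun pr : K × K =>
      (h pr.1 = h pr.2 ∧ ¬ pr.1 = pr.2) ∧ pr.1 + pr.2 = 0).card = Rf.card := by
    refine (Finset.card_nbij (s := Rf) (i := fun u : K => ((u, -u) : K × K)) ?_ ?_ ?_).symm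
    · intro u hu
      rw [hRfdef, Finset.mem_coe, Finset.mem_filter] at hu
      obtain ⟨-, hu⟩ := hu
      have hu0 : u ≠ 0 := by
        intro h0
        rw [h0] at hu
        exact h5K (by linear_combination hu)
      have hhu : h u = 0 := by
        have : h u = u * (u ^ 4 - 5 * u ^ 2 + 5) := by simp only [hhdef]; ring
        rw [this, hu, mul_zero]
      simp only [Finset.mem_coe, Finset.mem_filter, Finset.mem_univ, true_and]
      refine ⟨⟨?_, ?_⟩, by ring⟩
      · rw [hodd, hhu, neg_zero]
      · intro e
        apply hu0
        rcases mul_eq_zero.mp (show (2 : K) * u = 0 by linear_combination e) with hc | hc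
        · exact absurd hc h2K
        · exact hc
    · intro a _ b _ hab
      exact congrArg Prod.fst hab
    · intro b hb
      simp only [Finset.mem_coe, Finset.mem_filter, Finset.mem_univ, true_and] at hb
      obtain ⟨⟨hb1, hb2⟩, hb3⟩ := hb
      have hb2' : b.2 = -b.1 := by linear_combination hb3
      have hb10 : b.1 ≠ 0 := by
        intro h0
        exact hb2 (by rw [h0, hb2', h0, neg_zero])
      have hhb : h b.1 = 0 := by
        have e : h b.1 = - h b.1 := by
          conv_lhs => rw [hb1, hb2', hodd]
        rcases mul_eq_zero.mp (show (2 : K) * h b.1 = 0 by linear_combination e) with hc | hc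
        · exact absurd hc h2K
        · exact hc
      have hq4 : b.1 ^ 4 - 5 * b.1 ^ 2 + 5 = 0 := by
        have e : b.1 * (b.1 ^ 4 - 5 * b.1 ^ 2 + 5) = 0 := by
          rw [show b.1 * (b.1 ^ 4 - 5 * b.1 ^ 2 + 5) = h b.1 by simp only [hhdef]; ring, hhb]
        rcases mul_eq_zero.mp e with hc | hc
        · exact absurd hc hb10
        · exact hc
      refine ⟨b.1, ?_, ?_⟩
      · rw [hRfdef]
        simp only [Finset.mem_coe, Finset.mem_filter, Finset.mem_univ, true_and]
        exact hq4
      · exact Prod.ext rfl hb2'.symm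
  -- the root set has 0 or 4 elements
  have hRf : Rf.card % 4 = 0 := by
    rcases Finset.eq_empty_or_nonempty Rf with hemp | ⟨e, hee⟩
    · simp [hemp]
    · rw [hRfdef, Finset.mem_filter] at hee
      obtain ⟨-, he4⟩ := hee
      have hs5 : (2 * e ^ 2 - 5) ^ 2 = 5 := by linear_combination 4 * he4
      have he0 : e ≠ 0 := by
        intro h0
        rw [h0] at he4
        exact h5K (by linear_combination he4)
      have hne20 : 2 * e ^ 2 - 5 ≠ 0 := by
        intro h0
        rw [h0] at hs5
        exact h5K (by linear_combination - hs5)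
      obtain ⟨f, hfdef⟩ : ∃ f : K, f = (2 * e ^ 2 - 5) * e⁻¹ := ⟨_, rfl⟩
      have heinv : e * e⁻¹ = 1 := mul_inv_cancel₀ he0
      have h5e : e ^ 2 * (5 - e ^ 2) = 5 := by linear_combination - he4
      have hf2 : f ^ 2 = 5 - e ^ 2 := by
        calc f ^ 2 = (2 * e ^ 2 - 5) ^ 2 * (e⁻¹) ^ 2 := by rw [hfdef]; ring
        _ = (e ^ 2 * (5 - e ^ 2)) * (e⁻¹) ^ 2 := by rw [hs5, h5e]
        _ = (5 - e ^ 2) * (e * e⁻¹) ^ 2 := by ring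
        _ = 5 - e ^ 2 := by rw [heinv]; ring
      have hfroot : f ^ 4 - 5 * f ^ 2 + 5 = 0 := by
        calc f ^ 4 - 5 * f ^ 2 + 5 = (f ^ 2) ^ 2 - 5 * f ^ 2 + 5 := by ring
        _ = (5 - e ^ 2) ^ 2 - 5 * (5 - e ^ 2) + 5 := by rw [hf2]
        _ = e ^ 4 - 5 * e ^ 2 + 5 := by ring
        _ = 0 := he4
      have hf0 : f ≠ 0 := by
        intro h0
        have he25 : e ^ 2 = 5 := by
          have : (5 : K) - e ^ 2 = 0 := by rw [← hf2, h0]; ring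
          linear_combination - this
        exact h5K (by linear_combination he4 - e ^ 2 * he25)
      have hfe : f ^ 2 ≠ e ^ 2 := by
        intro h0
        exact hne20 (by linear_combination hf2 - h0)
      have hee' : e ≠ -e := by
        intro h0
        apply he0
        rcases mul_eq_zero.mp (show (2 : K) * e = 0 by linear_combination h0) with hc | hc
        · exact absurd hc h2K
        · exact hc
      have hff' : f ≠ -f := by
        intro h0
        apply hf0
        rcases mul_eq_zero.mp (show (2 : K) * f = 0 by linear_combination h0) with hc | hc
        · exact absurd hc h2K
        · exact hc
      have hef : e ≠ f := fun h0 => hfe (by linear_combination (-(e + f)) * h0)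
      have hef' : e ≠ -f := fun h0 => hfe (by linear_combination (f - e) * h0)
      have hef2 : -e ≠ f := fun h0 => hfe (by linear_combination (e - f) * h0)
      have hef3 : -e ≠ -f := fun h0 => hfe (by linear_combination (e + f) * h0)
      have hset : Rf = {e, -e, f, -f} := by
        rw [hRfdef]
        ext x
        simp only [Finset.mem_filter, Finset.mem_univ, true_and,
          Finset.mem_insert, Finset.mem_singleton]
        constructor
        · intro hx
          have hprod : (x - e) * (x + e) * ((x - f) * (x + f)) = 0 := by
            linear_combination hx - he4 - (x ^ 2 - e ^ 2) * hf2
          rcases mul_eq_zero.mp hprod with h12 | h34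
          · rcases mul_eq_zero.mp h12 with h1 | h2
            · exact Or.inl (by linear_combination h1)
            · exact Or.inr (Or.inl (by linear_combination h2))
          · rcases mul_eq_zero.mp h34 with h1 | h2
            · exact Or.inr (Or.inr (Or.inl (by linear_combination h1)))
            · exact Or.inr (Or.inr (Or.inr (by linear_combination h2)))
        · rintro (rfl | rfl | rfl | rfl)
          · exact he4
          · linear_combination he4
          · exact hfroot
          · linear_combination hfroot
      rw [hset]
      rw [Finset.card_insert_of_notMem (by
          simp only [Finset.mem_insert, Finset.mem_singleton]
          push_neg
          exact ⟨hee', hef, hef'⟩),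
        Finset.card_insert_of_notMem (by
          simp only [Finset.mem_insert, Finset.mem_singleton]
          push_neg
          exact ⟨hef2, hef3⟩),
        Finset.card_insert_of_notMem (by simpa using hff'),
        Finset.card_singleton]
  -- conclude #C ≡ q mod 4
  have hCq : (Finset.univ.filter fun pr : K × K => g pr.1 = g pr.2).card % 4 = q % 4 := by
    rw [cardShift, ← hsplit2, hdiag2]
    omega
  have goal2 : (∑ c : K, (m c) ^ 2) % 4 = q % 4 := by
    rw [← sumC]; exact hCq
  -- cardinality of X
  have eX : Nat.card {x : Fin 4 → K // chebP (x 0) (x 1) = chebP (x 2) (x 3)}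
      = (Finset.univ.filter fun pr : (K × K) × (K × K) => F pr.1 = F pr.2).card := by
    have e : {x : Fin 4 → K // chebP (x 0) (x 1) = chebP (x 2) (x 3)}
        ≃ {pr : (K × K) × (K × K) // F pr.1 = F pr.2} :=
      { toFun := fun x => ⟨((x.1 0, x.1 1), (x.1 2, x.1 3)), x.2⟩
        invFun := fun pr => ⟨![pr.1.1.1, pr.1.1.2, pr.1.2.1, pr.1.2.2], pr.2⟩
        left_inv := fun x => Subtype.ext (by funext i; fin_cases i <;> rfl)
        right_inv := fun pr => Subtype.ext rfl }
    rw [Nat.card_congr e, Nat.card_eq_fintype_card, Fintype.card_subtype]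
  have eC : Nat.card {yz : K × K // chebP yz.1 yz.1 = chebP yz.2 yz.2}
      = (Finset.univ.filter fun pr : K × K => g pr.1 = g pr.2).card := by
    rw [Nat.card_eq_fintype_card, Fintype.card_subtype]
  refine ⟨?_, ?_⟩
  · rw [eX, eC, sumX, sumC]; exact sums_mod
  · rw [eX, sumX]
    exact sums_mod.trans goal2
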